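/- If K is a commutative, absorptive, ω-continuous semiring, then for every Datalog program Σ, annotated database (D,K,λ), and fact α, NRT(Σ,D,K,λ,α) = AT(Σ,D,K,λ,α). -/

import Mathlib

attribute [local instance] Classical.propDecidable

namespace Datalog

/-- Terms are built from constants and variables. -/
inductive Term (C V : Type) : Type
  | const : C → Term C V
  | var : V → Term C V

/-- An atom over predicates `P` with arguments of type `τ`. -/
structure Atom (P τ : Type) : Type where
  pred : P
  args : List τ

/-- A fact (ground atom) has constants as arguments. -/
abbrev Fact (P C : Type) := Atom P C

/-- Substitution of a variable assignment in a term. -/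
def Term.subst {C : Type} {n : ℕ} (σ : Fin n → C) : Term C (Fin n) → C
  | Term.const c => c
  | Term.var v => σ v

/-- Substitution of a variable assignment in an atom, producing a fact. -/
def Atom.subst {P C : Type} {n : ℕ} (σ : Fin n → C) (a : Atom P (Term C (Fin n))) : Fact P C :=
  ⟨a.pred, a.args.map (Term.subst σ)⟩

/-- Renaming of predicates in an atom. -/
def Atom.mapPred {P Q τ : Type} (f : P → Q) (a : Atom P τ) : Atom Q τ := ⟨f a.pred, a.args⟩

/-- Turn a fact into a (ground) rule atom. -/
def Atom.toRuleAtom {P C : Type} (n : ℕ) (a : Fact P C) : Atom P (Term C (Fin n)) :=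
  ⟨a.pred, a.args.map Term.const⟩

/-- A (normalized) Datalog rule `φ(x⃗,y⃗) → H(x⃗)`: the body is a conjunction of atoms over
variables `x⃗ ∪ y⃗` (every variable of the rule occurs in the body), the head a single atom. -/
structure Rule (P C : Type) : Type where
  nvars : ℕ
  nbody : ℕ
  body : Fin nbody → Atom P (Term C (Fin nvars))
  head : Atom P (Term C (Fin nvars))
  vars_in_body : ∀ v : Fin nvars, ∃ i : Fin nbody, Term.var v ∈ (body i).args

variable {P C K : Type}

/-- A set of facts is closed under the rules of a program. -/
def ClosedUnder (prog : Set (Rule P C)) (I : Set (Fact P C)) : Prop :=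
  ∀ r ∈ prog, ∀ σ : Fin r.nvars → C,
    (∀ i, (r.body i).subst σ ∈ I) → r.head.subst σ ∈ I

/-- `Σ, D ⊨ α` : the fact `α` belongs to every set of facts containing `D`
and closed under the rules of `Σ`. -/
def Entails (prog : Set (Rule P C)) (D : Set (Fact P C)) (a : Fact P C) : Prop :=
  ∀ I : Set (Fact P C), D ⊆ I → ClosedUnder prog I → a ∈ I

/-- Derivation trees of a fact w.r.t. a program and a database: leaves are labeled by facts of
`D`; an inner node is labeled by a rule `r ∈ Σ` together with a homomorphism `σ`, its children
corresponding bijectively to the body atoms of `r`, and derives the fact `σ(head r)`. -/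
inductive DTree {P C : Type} (prog : Set (Rule P C)) (D : Set (Fact P C)) : Fact P C → Type
  | leaf (a : Fact P C) (ha : a ∈ D) : DTree prog D a
  | node (r : Rule P C) (hr : r ∈ prog) (σ : Fin r.nvars → C)
      (children : ∀ i : Fin r.nbody, DTree prog D ((r.body i).subst σ)) :
      DTree prog D (r.head.subst σ)

namespace DTree

variable {prog : Set (Rule P C)} {D : Set (Fact P C)}

/-- `Λ(t)`: the product of the annotations of the leaves of `t`. -/
def weight [CommSemiring K] (lam : Fact P C → K) : ∀ {a : Fact P C}, DTree prog D a → K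
  | _, .leaf a _ => lam a
  | _, .node r _ _ ch => ∏ i : Fin r.nbody, weight lam (ch i)

/-- The depth of a derivation tree. -/
def depth : ∀ {a : Fact P C}, DTree prog D a → ℕ
  | _, .leaf _ _ => 0
  | _, .node r _ _ ch => (Finset.univ.sup fun i : Fin r.nbody => depth (ch i)) + 1

/-- A derivation tree of `a` is of minimal depth if no derivation tree of `a` is of
smaller depth. -/
def minimalDepth {a : Fact P C} (t : DTree prog D a) : Prop :=
  ∀ t' : DTree prog D a, t.depth ≤ t'.depth

/-- A derivation tree is hereditary minimal-depth if every subtree rooted at an inner node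
is a minimal-depth derivation tree of the fact it derives. -/
def hereditaryMinimal : ∀ {a : Fact P C}, DTree prog D a → Prop
  | _, .leaf _ _ => True
  | _, .node r hr σ ch =>
      minimalDepth (.node r hr σ ch) ∧ ∀ i, hereditaryMinimal (ch i)

/-- `t.avoid s` : no fact labeling a node of `t` belongs to `s`, nor is repeated along a
root-to-leaf path. -/
def avoid : Set (Fact P C) → ∀ {a : Fact P C}, DTree prog D a → Prop
  | s, _, .leaf a _ => a ∉ s
  | s, _, .node r _ σ ch =>
      r.head.subst σ ∉ s ∧ ∀ i, avoid (insert (r.head.subst σ) s) (ch i)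

/-- A derivation tree is non-recursive if it does not contain two nodes labeled with the same
fact such that one is a descendant of the other. -/
def nonRecursive {a : Fact P C} (t : DTree prog D a) : Prop := t.avoid ∅

/-- `t.hasLeaf x` : `x` labels some leaf of `t`. -/
def hasLeaf (x : Fact P C) : ∀ {a : Fact P C}, DTree prog D a → Prop
  | _, .leaf a _ => a = x
  | _, .node _ _ _ ch => ∃ i, hasLeaf x (ch i)

end DTree

/-- The finite partial sums of `f` over the set `S`. -/
def partialSums {T : Type} [AddCommMonoid K] (S : Set T) (f : T → K) : Set K :=
  { x | ∃ F : Finset T, ↑F ⊆ S ∧ x = ∑ t ∈ F, f t }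

/-- The (possibly infinite) sum of `f` over `S`, i.e. the least upper bound of the finite
partial sums (junk value `0` if no least upper bound exists). -/
noncomputable def setSum {T : Type} [AddCommMonoid K] [PartialOrder K]
    (S : Set T) (f : T → K) : K :=
  if h : ∃ s, IsLUB (partialSums S f) s then h.choose else 0

/-- The greatest lower bound of a set of semiring elements (junk value `0` if none exists). -/
noncomputable def setInf [Zero K] [PartialOrder K] (S : Set K) : K :=
  if h : ∃ z, IsGLB S z then h.choose else 0

/-- A commutative ω-continuous semiring: the natural order `a ≤ b ↔ ∃ c, a + c = b` is a
partial order, every ω-chain has a least upper bound, and `+` and `×` preserve these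
least upper bounds. -/
class OmegaCommSemiring (K : Type) extends CommSemiring K, PartialOrder K where
  le_iff_exists_add : ∀ a b : K, a ≤ b ↔ ∃ c, a + c = b
  chain_lub : ∀ f : ℕ → K, Monotone f → ∃ s, IsLUB (Set.range f) s
  add_lub : ∀ (f : ℕ → K) (a s : K), Monotone f → IsLUB (Set.range f) s →
    IsLUB (Set.range fun n => a + f n) (a + s)
  mul_lub : ∀ (f : ℕ → K) (a s : K), Monotone f → IsLUB (Set.range f) s →
    IsLUB (Set.range fun n => a * f n) (a * s)

/-- A positive semiring: a product is zero iff one factor is, a sum is zero iff both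
summands are. -/
def PositiveSemiring (K : Type) [CommSemiring K] : Prop :=
  (∀ a b : K, a * b = 0 ↔ a = 0 ∨ b = 0) ∧ (∀ a b : K, a + b = 0 ↔ a = 0 ∧ b = 0)

/-- An annotated database: a set of facts together with an annotation function assigning a
semiring element to every fact (`0` outside the database). -/
structure AnnDB (P C K : Type) [Zero K] : Type where
  facts : Set (Fact P C)
  ann : Fact P C → K
  ann_eq_zero : ∀ a ∉ facts, ann a = 0

/-- Union of two annotated databases: annotations are added pointwise. -/
noncomputable def AnnDB.union [AddCommMonoid K] (d₁ d₂ : AnnDB P C K) : AnnDB P C K where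
  facts := d₁.facts ∪ d₂.facts
  ann a := d₁.ann a + d₂.ann a
  ann_eq_zero a ha := by
    show d₁.ann a + d₂.ann a = 0
    rw [d₁.ann_eq_zero a fun h => ha (Set.mem_union_left _ h),
      d₂.ann_eq_zero a fun h => ha (Set.mem_union_right _ h), add_zero]

/-- The facts derivable from `I` by one application of a rule of `prog`. -/
def derivable (prog : Set (Rule P C)) (I : Set (Fact P C)) : Set (Fact P C) :=
  { a | ∃ r ∈ prog, ∃ σ : Fin r.nvars → C,
      (∀ i, (r.body i).subst σ ∈ I) ∧ r.head.subst σ = a }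

/-- The relational provenance of the immediate consequences: the sum over all rules and
homomorphisms deriving `a` of the product of the annotations of the body facts. -/
noncomputable def ruleSum [CommSemiring K] (prog : Set (Rule P C)) (I : Set (Fact P C))
    (lam : Fact P C → K) (a : Fact P C) : K :=
  ∑ᶠ (p : (r : Rule P C) × (Fin r.nvars → C))
      (_ : p.1 ∈ prog ∧ (∀ i, (p.1.body i).subst p.2 ∈ I) ∧ p.1.head.subst p.2 = a),
    ∏ i : Fin p.1.nbody, lam ((p.1.body i).subst p.2)

/-- The annotation-aware immediate consequence operator `T_Σ`. -/
noncomputable def Tcons [CommSemiring K] (prog : Set (Rule P C)) (db : AnnDB P C K) :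
    AnnDB P C K where
  facts := derivable prog db.facts
  ann a := if a ∈ derivable prog db.facts then ruleSum prog db.facts db.ann a else 0
  ann_eq_zero a ha := if_neg ha

/-- The operator `Δ_Σ`: `T_Σ` restricted to the newly derived facts. -/
noncomputable def Dcons [CommSemiring K] (prog : Set (Rule P C)) (db : AnnDB P C K) :
    AnnDB P C K where
  facts := (Tcons prog db).facts \ db.facts
  ann a := if a ∈ (Tcons prog db).facts \ db.facts then (Tcons prog db).ann a else 0
  ann_eq_zero a ha := if_neg ha

/-- The naive evaluation sequence `I_n^0 := (D,K,λ)`, `I_n^{i+1} := T_Σ(I_n^i) ∪ (D,K,λ)`. -/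
noncomputable def naiveSeq [CommSemiring K] (prog : Set (Rule P C)) (db : AnnDB P C K) :
    ℕ → AnnDB P C K
  | 0 => db
  | i + 1 => (Tcons prog (naiveSeq prog db i)).union db

/-- The naive execution provenance semantics: the least upper bound of the annotations of `a`
along the naive evaluation sequence (and `0` if `a` is never derived). -/
noncomputable def NE [CommSemiring K] [PartialOrder K] (prog : Set (Rule P C))
    (db : AnnDB P C K) (a : Fact P C) : K :=
  if ∃ i, a ∈ (naiveSeq prog db i).facts then
    (if h : ∃ s, IsLUB (Set.range fun i => (naiveSeq prog db i).ann a) s then h.choose else 0)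
  else 0

/-- The optimized naive evaluation sequence, which stops as soon as the target fact is
derived. -/
noncomputable def optSeq [CommSemiring K] (prog : Set (Rule P C)) (db : AnnDB P C K)
    (target : Fact P C) : ℕ → AnnDB P C K
  | 0 => db
  | i + 1 =>
      if target ∈ (optSeq prog db target i).facts then optSeq prog db target i
      else (Tcons prog (optSeq prog db target i)).union db

/-- The optimized execution provenance semantics: the annotation of the target fact at the
stabilization point of the optimized naive evaluation sequence. -/
noncomputable def OE [CommSemiring K] (prog : Set (Rule P C)) (db : AnnDB P C K)
    (target : Fact P C) : K :=
  if h : ∃ k, ∀ ℓ, k ≤ ℓ → optSeq prog db target ℓ = optSeq prog db target k then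
    (optSeq prog db target h.choose).ann target
  else 0

/-- The seminaive evaluation sequence `I_sn^0 := (D,K,λ)`, `I_sn^{i+1} := I_sn^i ∪ Δ_Σ(I_sn^i)`. -/
noncomputable def semiSeq [CommSemiring K] (prog : Set (Rule P C)) (db : AnnDB P C K) :
    ℕ → AnnDB P C K
  | 0 => db
  | i + 1 => (semiSeq prog db i).union (Dcons prog (semiSeq prog db i))

/-- The seminaive execution provenance semantics: the annotation of the fact at the
stabilization point of the seminaive evaluation sequence. -/
noncomputable def SNE [CommSemiring K] (prog : Set (Rule P C)) (db : AnnDB P C K)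
    (a : Fact P C) : K :=
  if h : ∃ k, ∀ ℓ, k ≤ ℓ → semiSeq prog db ℓ = semiSeq prog db k then
    (semiSeq prog db h.choose).ann a
  else 0

/-- The all-tree provenance semantics `AT`: the (possibly infinite) sum, over all derivation
trees of `a`, of the product of the annotations of the leaves. -/
noncomputable def AT [CommSemiring K] [PartialOrder K] (prog : Set (Rule P C))
    (db : AnnDB P C K) (a : Fact P C) : K :=
  setSum (Set.univ : Set (DTree prog db.facts a)) fun t => t.weight db.ann

/-- The non-recursive tree provenance semantics `NRT`. -/
noncomputable def NRT [CommSemiring K] (prog : Set (Rule P C)) (db : AnnDB P C K)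
    (a : Fact P C) : K :=
  ∑ᶠ (t : DTree prog db.facts a) (_ : t.nonRecursive), t.weight db.ann

/-- The minimal depth tree provenance semantics `MDT`. -/
noncomputable def MDT [CommSemiring K] (prog : Set (Rule P C)) (db : AnnDB P C K)
    (a : Fact P C) : K :=
  ∑ᶠ (t : DTree prog db.facts a) (_ : t.minimalDepth), t.weight db.ann

/-- The hereditary minimal depth tree provenance semantics `HMDT`. -/
noncomputable def HMDT [CommSemiring K] (prog : Set (Rule P C)) (db : AnnDB P C K)
    (a : Fact P C) : K :=
  ∑ᶠ (t : DTree prog db.facts a) (_ : t.hereditaryMinimal), t.weight db.ann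

/-- `σ'` agrees with `σ` on the head variables of `r` (i.e. `h'(x⃗) = h(x⃗)`). -/
def headAgree (r : Rule P C) (σ σ' : Fin r.nvars → C) : Prop :=
  ∀ v : Fin r.nvars, Term.var v ∈ r.head.args → σ' v = σ v

/-- A `K`-annotated interpretation `(I,μ)` is a model of `Σ` and `(D,K,λ)`. -/
def IsAnnModel [CommSemiring K] [PartialOrder K] (prog : Set (Rule P C)) (db : AnnDB P C K)
    (I : Set (Fact P C)) (μ : Fact P C → K) : Prop :=
  db.facts ⊆ I ∧ (∀ a ∈ db.facts, db.ann a ≤ μ a) ∧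
  ∀ r ∈ prog, ∀ σ : Fin r.nvars → C, (∀ i, (r.body i).subst σ ∈ I) →
    r.head.subst σ ∈ I ∧
    setSum {σ' : Fin r.nvars → C | (∀ i, (r.body i).subst σ' ∈ I) ∧ headAgree r σ σ'}
        (fun σ' => ∏ i : Fin r.nbody, μ ((r.body i).subst σ'))
      ≤ μ (r.head.subst σ)

/-- The annotated model-based provenance semantics `AM`: the greatest lower bound, over all
annotated models, of the annotation of `a` (and `0` if `a` is not entailed). -/
noncomputable def AM [CommSemiring K] [PartialOrder K] (prog : Set (Rule P C))
    (db : AnnDB P C K) (a : Fact P C) : K :=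
  if Entails prog db.facts a then
    setInf { x | ∃ I μ, IsAnnModel prog db I μ ∧ μ a = x }
  else 0

/-- A `K`-set-annotated interpretation `(I,μ)` is a model of `Σ` and `(D,K,λ)`. -/
def IsSetAnnModel [CommSemiring K] (prog : Set (Rule P C)) (db : AnnDB P C K)
    (I : Set (Fact P C)) (μ : Fact P C → Set K) : Prop :=
  db.facts ⊆ I ∧ (∀ a ∈ db.facts, db.ann a ∈ μ a) ∧
  ∀ r ∈ prog, ∀ σ : Fin r.nvars → C, (∀ i, (r.body i).subst σ ∈ I) →
    r.head.subst σ ∈ I ∧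
    ∀ g : Fin r.nbody → K, (∀ i, g i ∈ μ ((r.body i).subst σ)) →
      (∏ i, g i) ∈ μ (r.head.subst σ)

/-- The set-annotated model-based provenance semantics `SAM`: the sum of the elements of the
intersection, over all set-annotated models, of the annotation set of `a`. -/
noncomputable def SAM [CommSemiring K] [PartialOrder K] (prog : Set (Rule P C))
    (db : AnnDB P C K) (a : Fact P C) : K :=
  setSum { k : K | ∀ I μ, IsSetAnnModel prog db I μ → k ∈ μ a } id

/-- The schema of a program: the predicates occurring in its rules. -/
def progSchema (prog : Set (Rule P C)) : Set P :=
  { p | ∃ r ∈ prog, r.head.pred = p ∨ ∃ i, (r.body i).pred = p }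

/-- The schema of a database: the predicates occurring in its facts. -/
def dbSchema (D : Set (Fact P C)) : Set P := { p | ∃ a ∈ D, a.pred = p }

/-- The domain of a database: the constants occurring in its facts. -/
def dbConsts (D : Set (Fact P C)) : Set C := { c | ∃ a ∈ D, c ∈ a.args }

/-- A ground rule built from a list of facts (the body) and a fact (the head). -/
def factRule (body : List (Fact P C)) (head : Fact P C) : Rule P C where
  nvars := 0
  nbody := body.length
  body := fun i => (body.get i).toRuleAtom 0
  head := head.toRuleAtom 0
  vars_in_body := fun v => v.elim0

/-- A ground instance of a rule. -/
def Rule.ground (r : Rule P C) (σ : Fin r.nvars → C) : Rule P C where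
  nvars := 0
  nbody := r.nbody
  body := fun i => ((r.body i).subst σ).toRuleAtom 0
  head := (r.head.subst σ).toRuleAtom 0
  vars_in_body := fun v => v.elim0

/-- The grounding `Σ_D` of a program w.r.t. the domain of a database. -/
def grounding (prog : Set (Rule P C)) (D : Set (Fact P C)) : Set (Rule P C) :=
  { r' | ∃ r ∈ prog, ∃ σ : Fin r.nvars → C, (∀ v, σ v ∈ dbConsts D) ∧ r' = r.ground σ }

/-- Renaming of predicates in a rule. -/
def Rule.mapPred {Q : Type} (f : P → Q) (r : Rule P C) : Rule Q C where
  nvars := r.nvars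
  nbody := r.nbody
  body := fun i => (r.body i).mapPred f
  head := r.head.mapPred f
  vars_in_body := fun v => r.vars_in_body v

/-- An adornment of a rule: exactly one body atom is adorned (sent to the `Sum.inr` copy of
the predicates), the head is adorned or not, all the other atoms keep their predicates
(`Sum.inl` copy). -/
def adornRule (r : Rule P C) (i : Fin r.nbody) (adornHead : Bool) : Rule (P ⊕ P) C where
  nvars := r.nvars
  nbody := r.nbody
  body := fun j => if j = i then (r.body j).mapPred Sum.inr else (r.body j).mapPred Sum.inl
  head := if adornHead then r.head.mapPred Sum.inr else r.head.mapPred Sum.inl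
  vars_in_body := by
    intro v
    obtain ⟨j, hj⟩ := r.vars_in_body v
    refine ⟨j, ?_⟩
    try dsimp only
    split <;> exact hj

/-- The set of adornments of a rule. -/
def adornedRules (r : Rule P C) : Set (Rule (P ⊕ P) C) :=
  { r' | ∃ (i : Fin r.nbody) (b : Bool), r' = adornRule r i b }

section AuxK

variable {K : Type} [OmegaCommSemiring K]

lemma kle_iff {a b : K} : a ≤ b ↔ ∃ c, a + c = b :=
  OmegaCommSemiring.le_iff_exists_add a b

lemma kzero_le (a : K) : 0 ≤ a := kle_iff.mpr ⟨a, zero_add a⟩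

lemma kle_add_right (a c : K) : a ≤ a + c := kle_iff.mpr ⟨c, rfl⟩

lemma kadd_le_add {a b c d : K} (h1 : a ≤ b) (h2 : c ≤ d) : a + c ≤ b + d := by
  obtain ⟨e, he⟩ := kle_iff.mp h1
  obtain ⟨f, hf⟩ := kle_iff.mp h2
  exact kle_iff.mpr ⟨e + f, by rw [← he, ← hf]; ring⟩

lemma kmul_le_mul {a b c d : K} (h1 : a ≤ b) (h2 : c ≤ d) : a * c ≤ b * d := by
  obtain ⟨e, he⟩ := kle_iff.mp h1
  obtain ⟨f, hf⟩ := kle_iff.mp h2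
  exact kle_iff.mpr ⟨a * f + e * c + e * f, by rw [← he, ← hf]; ring⟩

variable (habs : ∀ a b : K, a * b + a = a)
include habs

lemma kidem (a : K) : a + a = a := by have := habs a 1; rwa [mul_one] at this

lemma kabsorb (a b : K) : a * b ≤ a := kle_iff.mpr ⟨a, habs a b⟩

lemma ksum_le {ι : Type*} {F : Finset ι} {f : ι → K} {c : K}
    (h : ∀ i ∈ F, f i ≤ c) : ∑ i ∈ F, f i ≤ c := by
  classical
  induction F using Finset.cons_induction with
  | empty => simpa using kzero_le c
  | cons i F hi ih =>
    rw [Finset.sum_cons]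
    calc f i + ∑ j ∈ F, f j ≤ c + c :=
          kadd_le_add (h i (Finset.mem_cons_self i F))
            (ih fun j hj => h j (Finset.mem_cons_of_mem hj))
      _ = c := kidem habs c

omit habs

lemma kle_sum {ι : Type*} {F : Finset ι} {f : ι → K} {i : ι} (hi : i ∈ F) :
    f i ≤ ∑ j ∈ F, f j := by
  classical
  rw [← Finset.add_sum_erase F f hi]
  exact kle_add_right _ _

lemma kprod_le_prod {ι : Type*} {F : Finset ι} {f g : ι → K}
    (h : ∀ i ∈ F, f i ≤ g i) : ∏ i ∈ F, f i ≤ ∏ i ∈ F, g i := by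
  classical
  induction F using Finset.cons_induction with
  | empty => simp
  | cons i F hi ih =>
    rw [Finset.prod_cons, Finset.prod_cons]
    exact kmul_le_mul (h i (Finset.mem_cons_self i F))
      (ih fun j hj => h j (Finset.mem_cons_of_mem hj))

include habs

lemma kprod_le_single {ι : Type*} {F : Finset ι} {f : ι → K} {i : ι} (hi : i ∈ F) :
    ∏ j ∈ F, f j ≤ f i := by
  classical
  rw [← Finset.mul_prod_erase F f hi]
  exact kabsorb habs _ _

end AuxK
section AuxTree

variable {P C K : Type} {prog : Set (Rule P C)} {D : Set (Fact P C)}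

namespace DTree

/-- The number of nodes of a derivation tree. -/
def size : ∀ {a : Fact P C}, DTree prog D a → ℕ
  | _, .leaf _ _ => 1
  | _, .node r _ _ ch => (∑ i : Fin r.nbody, size (ch i)) + 1

lemma size_pos : ∀ {a : Fact P C} (t : DTree prog D a), 0 < t.size
  | _, .leaf _ _ => Nat.one_pos
  | _, .node _ _ _ _ => Nat.succ_pos _

lemma size_child_lt {r : Rule P C} (hr : r ∈ prog) (σ : Fin r.nvars → C)
    (ch : ∀ i : Fin r.nbody, DTree prog D ((r.body i).subst σ)) (i : Fin r.nbody) :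
    (ch i).size < (DTree.node r hr σ ch).size := by
  show (ch i).size < (∑ j : Fin r.nbody, (ch j).size) + 1
  exact Nat.lt_succ_of_le (Finset.single_le_sum (f := fun j => (ch j).size)
    (fun j _ => Nat.zero_le _) (Finset.mem_univ i))

lemma weight_cast [CommSemiring K] (lam : Fact P C → K) {a b : Fact P C} (h : a = b)
    (t : DTree prog D a) : DTree.weight lam (h ▸ t) = t.weight lam := by subst h; rfl

lemma size_cast {a b : Fact P C} (h : a = b) (t : DTree prog D a) :
    DTree.size (h ▸ t) = t.size := by subst h; rfl

lemma nonRecursive_cast {a b : Fact P C} (h : a = b) (t : DTree prog D a)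
    (ht : t.nonRecursive) : (h ▸ t : DTree prog D b).nonRecursive := by subst h; exact ht

end DTree

variable [OmegaCommSemiring K] (habs : ∀ a b : K, a * b + a = a) (lam : Fact P C → K)
include habs

/-- Collapse lemma: from any derivation tree we can obtain one avoiding `s`
(or a strictly smaller tree rooted at some fact of `s`) of at least the same weight. -/
lemma collapse_aux : ∀ (n : ℕ) (a : Fact P C) (t : DTree prog D a), t.size ≤ n →
    ∀ s : Set (Fact P C), a ∉ s →
    (∃ t' : DTree prog D a, t'.avoid s ∧ t.weight lam ≤ t'.weight lam) ∨
    (∃ b ∈ s, ∃ t' : DTree prog D b, t'.size < t.size ∧ t.weight lam ≤ t'.weight lam) := by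
  intro n
  induction n using Nat.strong_induction_on with
  | _ n IH =>
  intro a t htn s has
  cases t with
  | leaf a ha => exact Or.inl ⟨DTree.leaf a ha, has, le_refl _⟩
  | node r hr σ ch =>
    set β := r.head.subst σ with hβ
    have hwle : ∀ i, (DTree.node r hr σ ch).weight lam ≤ (ch i).weight lam := by
      intro i
      show (∏ j : Fin r.nbody, (ch j).weight lam) ≤ _
      exact kprod_le_single habs (Finset.mem_univ i)
    have hszch : ∀ i, (ch i).size < (DTree.node r hr σ ch).size :=
      DTree.size_child_lt hr σ ch
    have hn : ∀ i, (ch i).size < n := fun i => lt_of_lt_of_le (hszch i) htn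
    by_cases H : ∀ i, (r.body i).subst σ ∉ insert β s
    · -- recurse on all children
      have hres : ∀ i : Fin r.nbody,
          (∃ t' : DTree prog D ((r.body i).subst σ), t'.avoid (insert β s) ∧
            (ch i).weight lam ≤ t'.weight lam) ∨
          (∃ b ∈ insert β s, ∃ t' : DTree prog D b, t'.size < (ch i).size ∧
            (ch i).weight lam ≤ t'.weight lam) :=
        fun i => IH (ch i).size (hn i) _ (ch i) (le_refl _) (insert β s) (H i)
      by_cases Hall : ∀ i, ∃ t' : DTree prog D ((r.body i).subst σ),
          t'.avoid (insert β s) ∧ (ch i).weight lam ≤ t'.weight lam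
      · choose ch' hav hw using Hall
        refine Or.inl ⟨DTree.node r hr σ ch', ⟨has, hav⟩, ?_⟩
        show (∏ i : Fin r.nbody, (ch i).weight lam) ≤ ∏ i : Fin r.nbody, (ch' i).weight lam
        exact kprod_le_prod fun i _ => hw i
      · push_neg at Hall
        obtain ⟨i, hi⟩ := Hall
        rcases hres i with ⟨t'0, hav0, hw0⟩ | ⟨b, hb, t', hsz, hw⟩
        · exact absurd hw0 (hi t'0 hav0)
        rcases Set.mem_insert_iff.mp hb with rfl | hbs
        · -- b = β : recurse on t'
          rcases IH t'.size (lt_of_lt_of_le (lt_trans hsz (hszch i)) htn)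
              _ t' (le_refl _) s has with
            ⟨t'', hav, hw2⟩ | ⟨b', hb', t'', hsz2, hw2⟩
          · exact Or.inl ⟨t'', hav, le_trans (hwle i) (le_trans hw hw2)⟩
          · exact Or.inr ⟨b', hb', t'',
              lt_trans (lt_trans hsz2 hsz) (hszch i),
              le_trans (hwle i) (le_trans hw hw2)⟩
        · exact Or.inr ⟨b, hbs, t', lt_trans hsz (hszch i), le_trans (hwle i) hw⟩
    · push_neg at H
      obtain ⟨i, hi⟩ := H
      rcases Set.mem_insert_iff.mp hi with heq | hbs
      · -- child root equals β : recurse on the cast child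
        have u : DTree prog D β := heq ▸ ch i
        rcases IH (heq ▸ ch i : DTree prog D β).size
            (by rw [DTree.size_cast]; exact hn i) _ (heq ▸ ch i) (le_refl _) s has with
          ⟨t'', hav, hw2⟩ | ⟨b', hb', t'', hsz2, hw2⟩
        · exact Or.inl ⟨t'', hav, le_trans (hwle i)
            (by rwa [DTree.weight_cast] at hw2)⟩
        · refine Or.inr ⟨b', hb', t'', ?_, le_trans (hwle i)
            (by rwa [DTree.weight_cast] at hw2)⟩
          rw [DTree.size_cast] at hsz2
          exact lt_trans hsz2 (hszch i)
      · exact Or.inr ⟨_, hbs, ch i, hszch i, hwle i⟩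

/-- Every derivation tree is dominated in weight by a non-recursive one. -/
lemma collapse {a : Fact P C} (t : DTree prog D a) :
    ∃ t' : DTree prog D a, t'.nonRecursive ∧ t.weight lam ≤ t'.weight lam := by
  rcases collapse_aux habs lam t.size a t (le_refl _) ∅ (Set.notMem_empty a) with
    ⟨t', hav, hw⟩ | ⟨b, hb, _⟩
  · exact ⟨t', hav, hw⟩
  · exact absurd hb (Set.notMem_empty b)

end AuxTree
section AuxFin

variable {P C : Type} (prog : Set (Rule P C)) (D : Set (Fact P C))

/-- Predicates that may occur in derivation trees. -/
def goodPred : Set P :=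
  (fun a : Fact P C => a.pred) '' D ∪ (fun r : Rule P C => r.head.pred) '' prog

/-- Constants that may occur in derivation trees. -/
def goodConst : Set C :=
  (⋃ a ∈ D, {c | c ∈ (a : Fact P C).args}) ∪
    ⋃ r ∈ prog, {c | Term.const c ∈ (r : Rule P C).head.args}

/-- Bound on the arity of facts in derivation trees. -/
noncomputable def lenB (hprog : prog.Finite) (hfin : D.Finite) : ℕ :=
  hfin.toFinset.sup (fun a => a.args.length) ⊔ hprog.toFinset.sup (fun r => r.head.args.length)

/-- Facts that may occur in derivation trees. -/
def GoodFact (n : ℕ) (a : Fact P C) : Prop :=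
  a.pred ∈ goodPred prog D ∧ (∀ c ∈ a.args, c ∈ goodConst prog D) ∧ a.args.length ≤ n

variable {prog D}

lemma goodPred_finite (hprog : prog.Finite) (hfin : D.Finite) : (goodPred prog D).Finite :=
  (hfin.image _).union (hprog.image _)

lemma goodConst_finite (hprog : prog.Finite) (hfin : D.Finite) : (goodConst prog D).Finite := by
  apply Set.Finite.union
  · exact hfin.biUnion fun a _ => a.args.finite_toSet
  · refine hprog.biUnion fun r _ => ?_
    have : {c | Term.const c ∈ r.head.args} =
        (fun c => (Term.const c : Term C (Fin r.nvars))) ⁻¹' {u | u ∈ r.head.args} := rfl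
    rw [this]
    have hinj : Function.Injective (fun c : C => (Term.const c : Term C (Fin r.nvars))) :=
      fun c d h => by injection h
    exact Set.Finite.preimage (Function.Injective.injOn hinj) (List.finite_toSet _)

lemma tree_good (hprog : prog.Finite) (hfin : D.Finite) :
    ∀ {a : Fact P C} (_ : DTree prog D a), GoodFact prog D (lenB prog D hprog hfin) a := by
  intro a t
  induction t with
  | leaf a ha =>
    refine ⟨Or.inl ⟨a, ha, rfl⟩, fun c hc => Or.inl ?_, ?_⟩
    · exact Set.mem_biUnion ha hc
    · refine le_trans (Finset.le_sup (f := fun a : Fact P C => a.args.length) (hfin.mem_toFinset.mpr ha)) ?_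
      unfold lenB
      exact le_sup_left
  | node r hr σ ch ih =>
    refine ⟨Or.inr ⟨r, hr, rfl⟩, ?_, ?_⟩
    · intro c hc
      obtain ⟨u, hu, hsu⟩ := List.mem_map.mp hc
      cases u with
      | const c' =>
        cases hsu
        exact Or.inr (Set.mem_biUnion hr hu)
      | var v =>
        cases hsu
        obtain ⟨i, hvi⟩ := r.vars_in_body v
        have hmem : σ v ∈ ((r.body i).subst σ).args :=
          List.mem_map.mpr ⟨Term.var v, hvi, rfl⟩
        exact (ih i).2.1 _ hmem
    · show (r.head.args.map _).length ≤ _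
      rw [List.length_map]
      refine le_trans (Finset.le_sup (f := fun r : Rule P C => r.head.args.length) (hprog.mem_toFinset.mpr hr)) ?_
      unfold lenB
      exact le_sup_right

lemma goodFact_finite (hprog : prog.Finite) (hfin : D.Finite) (n : ℕ) :
    {a : Fact P C | GoodFact prog D n a}.Finite := by
  haveI : Finite ↥(goodConst prog D) := (goodConst_finite hprog hfin).to_subtype
  have hL : {l : List C | (∀ c ∈ l, c ∈ goodConst prog D) ∧ l.length ≤ n}.Finite := by
    refine Set.Finite.subset (Set.Finite.image (List.map Subtype.val)
      (List.finite_length_le ↥(goodConst prog D) n)) ?_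
    rintro l ⟨hc, hn⟩
    refine ⟨l.attach.map fun x => (⟨x.1, hc x.1 x.2⟩ : ↥(goodConst prog D)), ?_, ?_⟩
    · simpa using hn
    · rw [List.map_map]
      simp
  refine Set.Finite.subset (Set.Finite.image (fun q : P × List C => (⟨q.1, q.2⟩ : Fact P C))
    ((goodPred_finite hprog hfin).prod hL)) ?_
  rintro a ⟨h1, h2, h3⟩
  exact ⟨(a.pred, a.args), ⟨h1, h2, h3⟩, rfl⟩

lemma avoid_depth (hprog : prog.Finite) (hfin : D.Finite) :
    ∀ {a : Fact P C} (t : DTree prog D a) (s : Set (Fact P C)), t.avoid s →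
      t.depth ≤ ({x | GoodFact prog D (lenB prog D hprog hfin) x} \ s).ncard := by
  intro a t
  induction t with
  | leaf a ha => intro s _; exact Nat.zero_le _
  | node r hr σ ch ih =>
    intro s hav
    obtain ⟨hroot, hch⟩ := hav
    set GF := {x | GoodFact prog D (lenB prog D hprog hfin) x} with hGFdef
    have hGFfin : GF.Finite := goodFact_finite hprog hfin _
    have hβ : r.head.subst σ ∈ GF \ s :=
      ⟨tree_good hprog hfin (DTree.node r hr σ ch), hroot⟩
    have hset : GF \ insert (r.head.subst σ) s = (GF \ s) \ {r.head.subst σ} := by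
      ext x
      simp only [Set.mem_diff, Set.mem_insert_iff, Set.mem_singleton_iff]
      tauto
    have hcard : (GF \ insert (r.head.subst σ) s).ncard = (GF \ s).ncard - 1 := by
      rw [hset]
      exact Set.ncard_diff_singleton_of_mem hβ
    have hpos : 0 < (GF \ s).ncard :=
      (Set.ncard_pos hGFfin.diff).mpr ⟨_, hβ⟩
    show (Finset.univ.sup fun i => (ch i).depth) + 1 ≤ _
    have hsup : (Finset.univ.sup fun i => (ch i).depth) ≤ (GF \ s).ncard - 1 := by
      refine Finset.sup_le fun i _ => ?_
      have := ih i _ (hch i)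
      rwa [hcard] at this
    omega

/-- Codes for derivation trees of depth `≤ n+1` rooted at `a`. -/
def treeCode (hprog : prog.Finite) (CS : Set C) (n : ℕ) (a : Fact P C) : Type :=
  {c : Σ (r : ↥hprog.toFinset) (σ : Fin (r.1.nvars) → ↥CS),
      (∀ i : Fin r.1.nbody, ↥{t : DTree prog D ((r.1.body i).subst (fun v => (σ v).1)) |
        t.depth ≤ n}) // c.1.1.head.subst (fun v => (c.2.1 v).1) = a}

/-- Decoding a code into a derivation tree. -/
def decode (hprog : prog.Finite) (CS : Set C) (n : ℕ) (a : Fact P C)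
    (c : treeCode (D := D) hprog CS n a) : DTree prog D a :=
  c.2 ▸ DTree.node c.1.1.1 (hprog.mem_toFinset.mp c.1.1.2) (fun v => (c.1.2.1 v).1)
    (fun i => (c.1.2.2 i).1)

lemma treeCode_finite (hprog : prog.Finite) (CS : Set C) (hCS : CS.Finite) (n : ℕ)
    (a : Fact P C) (hfib : ∀ b : Fact P C, {t : DTree prog D b | t.depth ≤ n}.Finite) :
    Finite (treeCode (D := D) hprog CS n a) := by
  haveI : Finite ↥CS := hCS.to_subtype
  haveI : ∀ (r : ↥hprog.toFinset) (σ : Fin r.1.nvars → ↥CS) (i : Fin r.1.nbody),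
      Finite ↥{t : DTree prog D ((r.1.body i).subst (fun v => (σ v).1)) | t.depth ≤ n} :=
    fun r σ i => (hfib _).to_subtype
  unfold treeCode
  infer_instance

lemma depth_finite (hprog : prog.Finite) (hfin : D.Finite) :
    ∀ (n : ℕ) (a : Fact P C), {t : DTree prog D a | t.depth ≤ n}.Finite := by
  intro n
  induction n with
  | zero =>
    intro a
    by_cases ha : a ∈ D
    · refine Set.Finite.subset (Set.finite_singleton (DTree.leaf a ha)) ?_
      intro t ht
      cases t with
      | leaf a h => rfl
      | node r hr σ ch => simp [DTree.depth] at ht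
    · refine Set.Finite.subset (Set.finite_empty) ?_
      intro t ht
      cases t with
      | leaf a h => exact absurd h ha
      | node r hr σ ch => simp [DTree.depth] at ht
  | succ n ih =>
    intro a
    have hrange : (Set.range (decode (D := D) hprog (goodConst prog D) n a)).Finite := by
      haveI := treeCode_finite (D := D) hprog (goodConst prog D)
        (goodConst_finite hprog hfin) n a ih
      exact Set.finite_range _
    have hleaf : {t : DTree prog D a | ∃ h : a ∈ D, t = DTree.leaf a h}.Finite := by
      by_cases ha : a ∈ D
      · refine Set.Finite.subset (Set.finite_singleton (DTree.leaf a ha)) ?_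
        rintro t ⟨h, rfl⟩; rfl
      · refine Set.Finite.subset (Set.finite_empty) ?_
        rintro t ⟨h, rfl⟩; exact absurd h ha
    refine Set.Finite.subset (hleaf.union hrange) ?_
    intro t ht
    cases t with
    | leaf a h => exact Or.inl ⟨h, rfl⟩
    | node r hr σ ch =>
      right
      have hdep : ∀ i, (ch i).depth ≤ n := by
        intro i
        have hs : (Finset.univ.sup fun i => (ch i).depth) + 1 ≤ n + 1 := ht
        have h1 : (ch i).depth ≤ Finset.univ.sup fun j => (ch j).depth :=
          Finset.le_sup (f := fun j => (ch j).depth) (Finset.mem_univ i)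
        omega
      have hσ : ∀ v, σ v ∈ goodConst prog D := by
        intro v
        obtain ⟨i, hvi⟩ := r.vars_in_body v
        have hmem : σ v ∈ ((r.body i).subst σ).args :=
          List.mem_map.mpr ⟨Term.var v, hvi, rfl⟩
        exact (tree_good hprog hfin (ch i)).2.1 _ hmem
      exact ⟨⟨⟨⟨r, hprog.mem_toFinset.mpr hr⟩, fun v => ⟨σ v, hσ v⟩,
        fun i => ⟨ch i, hdep i⟩⟩, rfl⟩, rfl⟩

lemma nonRecursive_finite (hprog : prog.Finite) (hfin : D.Finite) (a : Fact P C) :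
    {t : DTree prog D a | t.nonRecursive}.Finite := by
  refine Set.Finite.subset (depth_finite hprog hfin
    ({x | GoodFact prog D (lenB prog D hprog hfin) x}.ncard) a) ?_
  intro t ht
  have h := avoid_depth hprog hfin t ∅ ht
  rw [Set.diff_empty] at h
  exact h

end AuxFin
/-- on absorptive commutative ω-continuous semirings, `NRT = AT`. -/
theorem statement_10 (P C K : Type) [OmegaCommSemiring K]
    (habs : ∀ a b : K, a * b + a = a)
    (prog : Set (Rule P C)) (hprog : prog.Finite)
    (db : AnnDB P C K) (hfin : db.facts.Finite)
    (hann : ∀ a ∈ db.facts, db.ann a ≠ 0) (α : Fact P C) :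
    NRT prog db α = AT prog db α := by
  classical
  have hNR : {t : DTree prog db.facts α | t.nonRecursive}.Finite :=
    nonRecursive_finite hprog hfin α
  set x₀ : K := ∑ t ∈ hNR.toFinset, t.weight db.ann with hx₀
  have h1 : NRT prog db α = x₀ := by
    unfold NRT
    exact finsum_mem_eq_finite_toFinset_sum (fun t => t.weight db.ann) hNR
  have hlub : IsLUB (partialSums (Set.univ : Set (DTree prog db.facts α))
      fun t => t.weight db.ann) x₀ := by
    constructor
    · rintro y ⟨F, hFsub, rfl⟩
      refine ksum_le habs fun t _ => ?_
      obtain ⟨t', hnr, hw⟩ := collapse habs db.ann t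
      exact le_trans hw (kle_sum (hNR.mem_toFinset.mpr hnr))
    · intro b hb
      exact hb ⟨hNR.toFinset, Set.subset_univ _, rfl⟩
  have he : ∃ s, IsLUB (partialSums (Set.univ : Set (DTree prog db.facts α))
      fun t => t.weight db.ann) s := ⟨x₀, hlub⟩
  have h2 : AT prog db α = x₀ := by
    unfold AT setSum
    rw [dif_pos he]
    exact he.choose_spec.unique hlub
  rw [h1, h2]

end Datalog
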